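/- For every finite set U ⊆ ℝ there exists a continuous, open, surjective map f : 𝕏 → ℝ such that for every u ∈ U the preimage f⁻¹({u}) is a singleton, where 𝕏 = {(x, y) ∈ ℝ² : |y| ≤ |sin x|} with the subspace topology. -/

import Mathlib

/-- The space `𝕏 = {(x, y) ∈ ℝ² : |y| ≤ |sin x|}` with the subspace topology. -/
def BraidSpace : Type := {p : ℝ × ℝ // |p.2| ≤ |Real.sin p.1|}

instance : TopologicalSpace BraidSpace := instTopologicalSpaceSubtype

open Filter Real Finset


lemma braid_proj_continuous : Continuous (fun p : BraidSpace => p.val.1) :=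
  (continuous_fst.comp continuous_subtype_val)

lemma braid_proj_isOpenMap : IsOpenMap (fun p : BraidSpace => p.val.1) := by
  apply IsOpenMap.of_nhds_le
  rintro ⟨⟨x₀, y₀⟩, hp⟩
  have habs : ∀ x : ℝ, |max (-|Real.sin x|) (min y₀ |Real.sin x|)| ≤ |Real.sin x| := by
    intro x
    rw [abs_le]
    refine ⟨le_max_left _ _, max_le (neg_le_self (abs_nonneg _)) (min_le_right _ _)⟩
  set σ : ℝ → BraidSpace := fun x =>
    ⟨(x, max (-|Real.sin x|) (min y₀ |Real.sin x|)), habs x⟩ with hσ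
  have hσc : Continuous σ := by
    apply Continuous.subtype_mk
    fun_prop
  have hσ0 : σ x₀ = ⟨(x₀, y₀), hp⟩ := by
    apply Subtype.ext
    simp only [hσ, Prod.mk.injEq]
    refine ⟨trivial, ?_⟩
    simp only [abs_le] at hp
    rw [min_eq_left hp.2, max_eq_right hp.1]
  calc nhds (x₀ : ℝ) = map (fun p : BraidSpace => p.val.1) (map σ (nhds x₀)) := by
        rw [Filter.map_map]; exact (Filter.map_id).symm
    _ ≤ map (fun p : BraidSpace => p.val.1) (nhds ⟨(x₀, y₀), hp⟩) := by
        apply Filter.map_mono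
        rw [← hσ0]
        exact hσc.continuousAt.tendsto


noncomputable def gFun (n : ℕ) (v : ℕ → ℝ) (ε : ℝ) (x : ℝ) : ℝ :=
  ε * x + (1 - ε) * (min x 0 + max (x - (n - 1 : ℕ) * π) 0)
    + ∑ i ∈ Finset.range (n - 1),
        ((v (i + 1) - v i) / π - ε) * (max ((i : ℝ) * π) (min x (((i : ℕ) + 1 : ℕ) * π)) - (i : ℝ) * π)
    + v 0

lemma gFun_continuous (n : ℕ) (v : ℕ → ℝ) (ε : ℝ) : Continuous (gFun n v ε) := by
  unfold gFun; fun_prop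

lemma gFun_strictMono (n : ℕ) (v : ℕ → ℝ) {ε : ℝ} (hε0 : 0 < ε) (hε1 : ε ≤ 1)
    (hs : ∀ i < n - 1, ε ≤ (v (i + 1) - v i) / π) : StrictMono (gFun n v ε) := by
  intro x y hxy
  unfold gFun
  have h1 : ε * x < ε * y := by nlinarith
  have h2 : (1 - ε) * (min x 0 + max (x - (n - 1 : ℕ) * π) 0)
      ≤ (1 - ε) * (min y 0 + max (y - (n - 1 : ℕ) * π) 0) := by
    apply mul_le_mul_of_nonneg_left _ (by linarith)
    gcongr <;> linarith
  have h3 : ∀ i ∈ Finset.range (n - 1),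
      ((v (i + 1) - v i) / π - ε) * (max ((i : ℝ) * π) (min x (((i : ℕ) + 1 : ℕ) * π)) - (i : ℝ) * π)
      ≤ ((v (i + 1) - v i) / π - ε) * (max ((i : ℝ) * π) (min y (((i : ℕ) + 1 : ℕ) * π)) - (i : ℝ) * π) := by
    intro i hi
    rw [Finset.mem_range] at hi
    apply mul_le_mul_of_nonneg_left _ (by linarith [hs i hi])
    gcongr
  have h4 := Finset.sum_le_sum h3
  linarith

lemma gFun_eventually_top (n : ℕ) (v : ℕ → ℝ) (ε : ℝ) :
    ∀ x ≥ ((n - 1 : ℕ) : ℝ) * π, gFun n v ε x =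
      x + (-(1 - ε) * ((n - 1 : ℕ) * π) + (∑ i ∈ Finset.range (n - 1), ((v (i + 1) - v i) / π - ε) * ((((i : ℕ) + 1 : ℕ) : ℝ) * π - (i : ℝ) * π)) + v 0) := by
  intro x hx
  have hπ := Real.pi_pos
  have h0 : (0:ℝ) ≤ ((n - 1 : ℕ) : ℝ) * π := by positivity
  unfold gFun
  rw [min_eq_right (by linarith), max_eq_left (by linarith)]
  have hsum : ∀ i ∈ Finset.range (n - 1),
      ((v (i + 1) - v i) / π - ε) * (max ((i : ℝ) * π) (min x (((i : ℕ) + 1 : ℕ) * π)) - (i : ℝ) * π)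
      = ((v (i + 1) - v i) / π - ε) * ((((i : ℕ) + 1 : ℕ) : ℝ) * π - (i : ℝ) * π) := by
    intro i hi
    rw [Finset.mem_range] at hi
    have hi1 : ((i + 1 : ℕ) : ℝ) ≤ ((n - 1 : ℕ) : ℝ) := by exact_mod_cast Nat.cast_le.mpr hi
    have : (((i : ℕ) + 1 : ℕ) : ℝ) * π ≤ x := le_trans (by nlinarith) hx
    rw [min_eq_right this, max_eq_right (by push_cast; nlinarith)]
  rw [Finset.sum_congr rfl hsum]
  ring

lemma gFun_eventually_bot (n : ℕ) (v : ℕ → ℝ) (ε : ℝ) :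
    ∀ x ≤ 0, gFun n v ε x = x + v 0 := by
  intro x hx
  have hπ := Real.pi_pos
  have h0 : (0:ℝ) ≤ ((n - 1 : ℕ) : ℝ) * π := by positivity
  unfold gFun
  rw [min_eq_left hx, max_eq_right (by linarith)]
  have hsum : ∀ i ∈ Finset.range (n - 1),
      ((v (i + 1) - v i) / π - ε) * (max ((i : ℝ) * π) (min x (((i : ℕ) + 1 : ℕ) * π)) - (i : ℝ) * π)
      = 0 := by
    intro i hi
    have h1 : (0:ℝ) ≤ (i : ℝ) * π := by positivity
    have h2 : x ≤ (((i : ℕ) + 1 : ℕ) : ℝ) * π := by push_cast; nlinarith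
    rw [min_eq_left h2, max_eq_left (by linarith)]
    ring
  rw [Finset.sum_congr rfl hsum, Finset.sum_const_zero]
  ring

lemma gFun_surjective (n : ℕ) (v : ℕ → ℝ) (ε : ℝ) : Function.Surjective (gFun n v ε) := by
  apply Continuous.surjective (gFun_continuous n v ε)
  · have heq : (fun x : ℝ => x + (-(1 - ε) * ((n - 1 : ℕ) * π) + (∑ i ∈ Finset.range (n - 1), ((v (i + 1) - v i) / π - ε) * ((((i : ℕ) + 1 : ℕ) : ℝ) * π - (i : ℝ) * π)) + v 0)) =ᶠ[atTop] gFun n v ε := by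
      filter_upwards [eventually_ge_atTop (((n - 1 : ℕ) : ℝ) * π)] with x hx
      exact (gFun_eventually_top n v ε x hx).symm
    exact Filter.Tendsto.congr' heq (tendsto_atTop_add_const_right atTop _ tendsto_id)
  · have heq : (fun x : ℝ => x + v 0) =ᶠ[atBot] gFun n v ε := by
      filter_upwards [eventually_le_atBot (0:ℝ)] with x hx
      exact (gFun_eventually_bot n v ε x hx).symm
    exact Filter.Tendsto.congr' heq (tendsto_atBot_add_const_right atBot _ tendsto_id)

lemma gFun_val (n : ℕ) (v : ℕ → ℝ) (ε : ℝ) {j : ℕ} (hj : j < n) :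
    gFun n v ε ((j : ℝ) * π) = v j := by
  have hπ := Real.pi_pos
  have hjn : j ≤ n - 1 := Nat.le_pred_of_lt hj
  have hjn' : (j : ℝ) ≤ ((n - 1 : ℕ) : ℝ) := by exact_mod_cast hjn
  unfold gFun
  rw [min_eq_right (by positivity), max_eq_right (by nlinarith)]
  have hsub : Finset.range j ⊆ Finset.range (n - 1) := Finset.range_subset_range.mpr hjn
  have hzero : ∀ i ∈ Finset.range (n - 1), i ∉ Finset.range j →
      ((v (i + 1) - v i) / π - ε) * (max ((i : ℝ) * π) (min ((j : ℝ) * π) (((i : ℕ) + 1 : ℕ) * π)) - (i : ℝ) * π) = 0 := by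
    intro i _ hij
    rw [Finset.mem_range, not_lt] at hij
    have h1 : (j : ℝ) ≤ (i : ℝ) := by exact_mod_cast hij
    have h2 : (j : ℝ) * π ≤ (((i : ℕ) + 1 : ℕ) : ℝ) * π := by push_cast; nlinarith
    rw [min_eq_left h2, max_eq_left (by nlinarith)]
    ring
  rw [← Finset.sum_subset hsub hzero]
  have hcongr : ∀ i ∈ Finset.range j,
      ((v (i + 1) - v i) / π - ε) * (max ((i : ℝ) * π) (min ((j : ℝ) * π) (((i : ℕ) + 1 : ℕ) * π)) - (i : ℝ) * π)
      = (v (i + 1) - v i) - ε * π := by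
    intro i hi
    rw [Finset.mem_range] at hi
    have h1 : ((i : ℕ) + 1 : ℕ) ≤ j := hi
    have h1' : (((i : ℕ) + 1 : ℕ) : ℝ) ≤ (j : ℝ) := by exact_mod_cast h1
    rw [min_eq_right (by nlinarith), max_eq_right (by push_cast; nlinarith)]
    push_cast
    field_simp
    ring
  rw [Finset.sum_congr rfl hcongr, Finset.sum_sub_distrib, Finset.sum_range_sub,
    Finset.sum_const, Finset.card_range, nsmul_eq_mul]
  ring

lemma gFun_isOpenMap (n : ℕ) (v : ℕ → ℝ) {ε : ℝ} (hε0 : 0 < ε) (hε1 : ε ≤ 1)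
    (hs : ∀ i < n - 1, ε ≤ (v (i + 1) - v i) / π) : IsOpenMap (gFun n v ε) :=
  (OrderIso.toHomeomorph
    (StrictMono.orderIsoOfSurjective _ (gFun_strictMono n v hε0 hε1 hs)
      (gFun_surjective n v ε))).isOpenMap


theorem braidSpace_gg_real (U : Set ℝ) (hU : U.Finite) :
    ∃ f : BraidSpace → ℝ, Continuous f ∧ IsOpenMap f ∧ Function.Surjective f ∧
      ∀ u ∈ U, ∃ x : BraidSpace, f ⁻¹' {u} = {x} := by
  classical
  set L : List ℝ := hU.toFinset.sort (· ≤ ·) with hL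
  set n : ℕ := L.length with hn
  set v : ℕ → ℝ := fun i => L.getD i 0 with hv
  have hsorted : List.Pairwise (· < ·) L := (Finset.sortedLT_sort _).pairwise
  have hgap : ∀ i < n - 1, 0 < v (i + 1) - v i := by
    intro i hi
    have h1 : i < n := lt_of_lt_of_le hi (Nat.sub_le n 1)
    have h2 : i + 1 < n := by omega
    have := (List.pairwise_iff_get.mp hsorted) ⟨i, h1⟩ ⟨i + 1, h2⟩ (by simp)
    simp only [hv]
    rw [List.getD_eq_getElem L 0 h1, List.getD_eq_getElem L 0 h2]
    simpa [sub_pos] using this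
  have hmemv : ∀ u ∈ U, ∃ j < n, v j = u := by
    intro u hu
    have : u ∈ L := by
      rw [hL, Finset.mem_sort]
      exact hU.mem_toFinset.mpr hu
    obtain ⟨⟨j, hj⟩, hget⟩ := List.mem_iff_get.mp this
    exact ⟨j, hj, by show L.getD j 0 = u; rw [List.getD_eq_getElem L 0 hj]; simpa using hget⟩
  have hπ := Real.pi_pos
  set S : Finset ℝ := insert 1 ((Finset.range (n - 1)).image (fun i => (v (i + 1) - v i) / π)) with hS
  have hSne : S.Nonempty := ⟨1, Finset.mem_insert_self _ _⟩
  set ε : ℝ := S.min' hSne with hε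
  have hε1 : ε ≤ 1 := Finset.min'_le _ _ (Finset.mem_insert_self _ _)
  have hεs : ∀ i < n - 1, ε ≤ (v (i + 1) - v i) / π := fun i hi =>
    Finset.min'_le _ _ (Finset.mem_insert_of_mem
      (Finset.mem_image_of_mem _ (Finset.mem_range.mpr hi)))
  have hε0 : 0 < ε := by
    rw [hε, Finset.lt_min'_iff]
    intro b hb
    rw [hS, Finset.mem_insert] at hb
    rcases hb with hb | hb
    · simp [hb]
    · obtain ⟨i, hi, rfl⟩ := Finset.mem_image.mp hb
      rw [Finset.mem_range] at hi
      exact div_pos (hgap i hi) hπ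
  set g : ℝ → ℝ := gFun n v ε with hg
  have hgm : StrictMono g := gFun_strictMono n v hε0 hε1 hεs
  refine ⟨g ∘ (fun p : BraidSpace => p.val.1), ?_, ?_, ?_, ?_⟩
  · exact (gFun_continuous n v ε).comp braid_proj_continuous
  · exact (gFun_isOpenMap n v hε0 hε1 hεs).comp braid_proj_isOpenMap
  · intro z
    obtain ⟨x, hx⟩ := gFun_surjective n v ε z
    exact ⟨⟨(x, 0), by simp⟩, hx⟩
  · intro u hu
    obtain ⟨j, hj, hvj⟩ := hmemv u hu
    have hsin : Real.sin ((j : ℝ) * π) = 0 := Real.sin_nat_mul_pi j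
    refine ⟨⟨((j : ℝ) * π, 0), by simp [hsin]⟩, ?_⟩
    ext ⟨⟨x, y⟩, hp⟩
    show g x = u ↔ (⟨⟨x, y⟩, hp⟩ : BraidSpace) = ⟨((j : ℝ) * π, 0), _⟩
    constructor
    · intro hx
      have hxj : x = (j : ℝ) * π := by
        apply hgm.injective
        rw [hx, ← hvj]
        exact (gFun_val n v ε hj).symm
      have hy : y = 0 := by
        subst hxj
        simp only [hsin, abs_zero] at hp
        exact abs_eq_zero.mp (le_antisymm hp (abs_nonneg y))
      apply Subtype.ext
      simp [hxj, hy]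
    · intro hx
      have : x = (j : ℝ) * π ∧ y = 0 := by
        have := congrArg Subtype.val hx
        simp at this
        exact this
      rw [this.1]
      exact (gFun_val n v ε hj).trans hvj
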